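/- Fix N ≥ 1 and r ∈ ℝ. Let H̃ be the N×N matrix with H̃_{ij} = (−1)^N(ψ_{i+j−N}(2r²) − ψ_{i+j−N+1}(2r²)) (ψ_n ≡ 0 for n < 0), Q the matrix with Q_{ij} = −2r if i=j, −4r if i>j, 0 if i<j, u the vector with all entries (−1)^{N−1}, and E = 4r·(H̃u)⊗u. Then QH̃ + H̃Q = −E. -/

import Mathlib

open MeasureTheory

/-- The `k`-th (normalized) Laguerre polynomial. -/
noncomputable def Lag (k : ℕ) (x : ℝ) : ℝ :=
  ∑ l ∈ Finset.range (k + 1), (k.choose l : ℝ) * (-1) ^ l / (Nat.factorial l) * x ^ l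

/-- The Laguerre function `ψ_n(x) = e^{-x/2} L_n(x)` for `n ≥ 0`,
extended by `ψ_n ≡ 0` for `n < 0`. -/
noncomputable def psiZ (n : ℤ) (x : ℝ) : ℝ :=
  if 0 ≤ n then Real.exp (-x / 2) * Lag n.toNat x else 0

/-- The Laguerre function with natural index. -/
noncomputable def psiL (n : ℕ) (x : ℝ) : ℝ := Real.exp (-x / 2) * Lag n x

/-- The matrix `H̃`, with `H̃_{ij} = (-1)^N (ψ_{i+j-N}(2r²) - ψ_{i+j-N+1}(2r²))`. -/
noncomputable def Ht (N : ℕ) (r : ℝ) : Matrix (Fin N) (Fin N) ℝ :=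
  fun i j => (-1) ^ N *
    (psiZ ((i : ℤ) + (j : ℤ) - (N : ℤ)) (2 * r ^ 2) -
     psiZ ((i : ℤ) + (j : ℤ) - (N : ℤ) + 1) (2 * r ^ 2))

/-- The matrix `Q`: `-2r` on the diagonal, `-4r` below it, `0` above it. -/
noncomputable def Qm (N : ℕ) (r : ℝ) : Matrix (Fin N) (Fin N) ℝ :=
  fun i j => if (i : ℕ) = (j : ℕ) then -2 * r
    else if (j : ℕ) < (i : ℕ) then -4 * r else 0

/-- The constant vector `u` with all entries `(-1)^{N-1}`. -/
noncomputable def uVec (N : ℕ) : Fin N → ℝ := fun _ => (-1) ^ (N - 1)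

/-- The alternating vector `v` with entries `v_i = 2(-1)^i`. -/
noncomputable def vVec (N : ℕ) : Fin N → ℝ := fun i => 2 * (-1) ^ (i : ℕ)

lemma psiZ_neg {n : ℤ} (hn : n < 0) (x : ℝ) : psiZ n x = 0 := by
  simp [psiZ, not_le.mpr hn]

lemma telPsi (x : ℝ) (d : ℤ) (c : ℕ) :
    ∑ k ∈ Finset.range c, (psiZ ((k : ℤ) + d) x - psiZ ((k : ℤ) + d + 1) x)
      = psiZ d x - psiZ ((c : ℤ) + d) x := by
  induction c with
  | zero => simp
  | succ n ih =>
      rw [Finset.sum_range_succ, ih]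
      have h1 : ((n + 1 : ℕ) : ℤ) + d = (n : ℤ) + d + 1 := by push_cast; ring
      rw [h1]
      ring

lemma tel (g : ℤ → ℝ) (d : ℤ) (c : ℕ) :
    ∑ k ∈ Finset.range c, (g ((k : ℤ) + d) - g ((k : ℤ) + d + 1)) = g d - g ((c : ℤ) + d) := by
  induction c with
  | zero => simp
  | succ n ih =>
      rw [Finset.sum_range_succ, ih]
      have h1 : ((n + 1 : ℕ) : ℤ) + d = (n : ℤ) + d + 1 := by push_cast; ring
      rw [h1]
      ring

lemma sum_lower (F : ℕ → ℝ) (a N : ℕ) (hN : a < N) (c d : ℝ) :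
    ∑ k ∈ Finset.range N, (if a = k then c else if k < a then d else 0) * F k
      = c * F a + d * ∑ k ∈ Finset.range a, F k := by
  have hsplit : ∀ k ∈ Finset.range N,
      (if a = k then c else if k < a then d else 0) * F k
        = (if a = k then c * F k else 0) + (if k < a then d * F k else 0) := by
    intro k _
    split_ifs <;> first | (exfalso; omega) | ring
  rw [Finset.sum_congr rfl hsplit, Finset.sum_add_distrib, Finset.sum_ite_eq,
    if_pos (Finset.mem_range.mpr hN)]
  congr 1
  rw [← Finset.sum_subset (Finset.range_subset_range.mpr hN.le)
    (by intro x _ hx; simp [Finset.mem_range] at hx ⊢; omega)]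
  rw [Finset.mul_sum]
  exact Finset.sum_congr rfl (by intro k hk; simp [Finset.mem_range.mp hk])

lemma sum_upper (F : ℕ → ℝ) (b N : ℕ) (hb : b < N) (c d : ℝ) :
    ∑ k ∈ Finset.range N, F k * (if k = b then c else if b < k then d else 0)
      = F b * c + d * (∑ k ∈ Finset.range N, F k - ∑ k ∈ Finset.range (b + 1), F k) := by
  have hsplit : ∀ k ∈ Finset.range N,
      F k * (if k = b then c else if b < k then d else 0)
        = (if k = b then F k * c else 0) + (if b < k then d * F k else 0) := by
    intro k _
    split_ifs <;> first | (exfalso; omega) | ring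
  rw [Finset.sum_congr rfl hsplit, Finset.sum_add_distrib, Finset.sum_ite_eq',
    if_pos (Finset.mem_range.mpr hb)]
  congr 1
  rw [← Finset.sum_Ico_eq_sub _ (by omega : b + 1 ≤ N)]
  rw [← Finset.sum_subset (by intro x hx; simp [Finset.mem_Ico, Finset.mem_range] at hx ⊢; omega : Finset.Ico (b+1) N ⊆ Finset.range N)
    (by intro x hx hx2; simp [Finset.mem_range, Finset.mem_Ico] at hx hx2 ⊢; omega)]
  rw [Finset.mul_sum]
  exact Finset.sum_congr rfl (by intro k hk; simp [Finset.mem_Ico] at hk; simp [(by omega : b < k)])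

theorem stmt13 (N : ℕ) (hN : 1 ≤ N) (r : ℝ) :
    Qm N r * Ht N r + Ht N r * Qm N r
      = -((4 * r) • Matrix.vecMulVec ((Ht N r).mulVec (uVec N)) (uVec N)) := by
  ext i j
  have hiN : (i : ℕ) < N := i.isLt
  have hjN : (j : ℕ) < N := j.isLt
  set x := 2 * r ^ 2 with hx
  set s : ℝ := (-1) ^ N with hs
  set F : ℕ → ℕ → ℝ := fun a b =>
    s * (psiZ ((a : ℤ) + (b : ℤ) - N) x - psiZ ((a : ℤ) + (b : ℤ) - N + 1) x) with hF
  have hHt : ∀ a b : Fin N, Ht N r a b = F (a : ℕ) (b : ℕ) := by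
    intro a b
    simp only [Ht, hF]; rfl
  simp only [Matrix.add_apply, Matrix.mul_apply, Matrix.neg_apply, Matrix.smul_apply,
    Matrix.vecMulVec_apply, Matrix.mulVec, dotProduct, smul_eq_mul, uVec]
  have h1 : (∑ k : Fin N, Qm N r i k * Ht N r k j)
      = ∑ k ∈ Finset.range N,
          (if (i : ℕ) = k then -2 * r else if k < (i : ℕ) then -4 * r else 0) * F k (j : ℕ) := by
    rw [← Fin.sum_univ_eq_sum_range
      (fun k => (if (i : ℕ) = k then -2 * r else if k < (i : ℕ) then -4 * r else 0) * F k (j : ℕ)) N]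
    exact Finset.sum_congr rfl fun k _ => by rw [hHt]; rfl
  have h2 : (∑ k : Fin N, Ht N r i k * Qm N r k j)
      = ∑ k ∈ Finset.range N,
          F (i : ℕ) k * (if k = (j : ℕ) then -2 * r else if (j : ℕ) < k then -4 * r else 0) := by
    rw [← Fin.sum_univ_eq_sum_range
      (fun k => F (i : ℕ) k * (if k = (j : ℕ) then -2 * r else if (j : ℕ) < k then -4 * r else 0)) N]
    exact Finset.sum_congr rfl fun k _ => by rw [hHt]; rfl
  have h3 : (∑ k : Fin N, Ht N r i k * (-1 : ℝ) ^ (N - 1))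
      = (∑ k ∈ Finset.range N, F (i : ℕ) k) * (-1 : ℝ) ^ (N - 1) := by
    rw [Finset.sum_mul, ← Fin.sum_univ_eq_sum_range (fun k => F (i : ℕ) k * (-1 : ℝ) ^ (N - 1)) N]
    exact Finset.sum_congr rfl fun k _ => by rw [hHt]
  rw [h1, h2, h3, sum_lower _ _ _ hiN, sum_upper _ _ _ hjN]
  -- telescoping evaluations
  have T1 : ∑ k ∈ Finset.range (i : ℕ), F k (j : ℕ)
      = s * (0 - psiZ ((i : ℤ) + (j : ℤ) - N) x) := by
    have e : ∑ k ∈ Finset.range (i : ℕ), F k (j : ℕ)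
        = s * ∑ k ∈ Finset.range (i : ℕ),
            (psiZ ((k : ℤ) + ((j : ℤ) - N)) x - psiZ ((k : ℤ) + ((j : ℤ) - N) + 1) x) := by
      rw [Finset.mul_sum]
      refine Finset.sum_congr rfl fun k _ => ?_
      simp only [hF]
      congr 2 <;> push_cast <;> ring
    rw [e, telPsi]
    have z : psiZ ((j : ℤ) - (N : ℤ)) x = 0 := psiZ_neg (by omega) x
    rw [z]
    congr 3
    push_cast; ring
  have T2 : ∑ k ∈ Finset.range N, F (i : ℕ) k
      = s * (0 - psiZ (i : ℤ) x) := by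
    have e : ∑ k ∈ Finset.range N, F (i : ℕ) k
        = s * ∑ k ∈ Finset.range N,
            (psiZ ((k : ℤ) + ((i : ℤ) - N)) x - psiZ ((k : ℤ) + ((i : ℤ) - N) + 1) x) := by
      rw [Finset.mul_sum]
      refine Finset.sum_congr rfl fun k _ => ?_
      simp only [hF]
      congr 2 <;> push_cast <;> ring
    rw [e, telPsi]
    have z : psiZ ((i : ℤ) - (N : ℤ)) x = 0 := psiZ_neg (by omega) x
    rw [z]
    congr 3
    push_cast; ring
  have T3 : ∑ k ∈ Finset.range ((j : ℕ) + 1), F (i : ℕ) k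
      = s * (0 - psiZ ((i : ℤ) + (j : ℤ) - N + 1) x) := by
    have e : ∑ k ∈ Finset.range ((j : ℕ) + 1), F (i : ℕ) k
        = s * ∑ k ∈ Finset.range ((j : ℕ) + 1),
            (psiZ ((k : ℤ) + ((i : ℤ) - N)) x - psiZ ((k : ℤ) + ((i : ℤ) - N) + 1) x) := by
      rw [Finset.mul_sum]
      refine Finset.sum_congr rfl fun k _ => ?_
      simp only [hF]
      congr 2 <;> push_cast <;> ring
    rw [e, telPsi]
    have z : psiZ ((i : ℤ) - (N : ℤ)) x = 0 := psiZ_neg (by omega) x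
    rw [z]
    congr 3
    push_cast; ring
  rw [T1, T2, T3]
  have hFij : F (i : ℕ) (j : ℕ)
      = s * (psiZ ((i : ℤ) + (j : ℤ) - N) x - psiZ ((i : ℤ) + (j : ℤ) - N + 1) x) := by
    simp only [hF]
  rw [hFij]
  have hu : ((-1 : ℝ)) ^ (N - 1) * (-1) ^ (N - 1) = 1 := by
    rw [← pow_add, ← two_mul, pow_mul]
    norm_num
  have h2pow : ((-1 : ℝ)) ^ ((N - 1) * 2) = 1 := by
    rw [mul_comm, pow_mul]; norm_num
  ring_nf
  rw [h2pow]
  ring
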